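/- Let r > 0 and α ∈ [0, π/2). Then the function ℓ ↦ g(ℓ, α, α) on [0, ∞) attains its maximum at ℓ₀ = 2·artanh(tanh(r)·cos(α)), and this maximizer is unique: g(ℓ, α, α) < g(ℓ₀, α, α) for every ℓ ≥ 0 with ℓ ≠ ℓ₀. -/

import Mathlib

set_option maxHeartbeats 1000000


open Real

/-- The inverse hyperbolic tangent. -/
noncomputable def artanh (x : ℝ) : ℝ := Real.log ((1 + x) / (1 - x)) / 2

/-- The candle function of hyperbolic `4`-space: `s(ℓ) = sinh³ ℓ`. -/
noncomputable def hypCandle (ℓ : ℝ) : ℝ := (sinh ℓ) ^ 3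

/-- The primitive of `hypCandle` vanishing at `0`. -/
noncomputable def hypCandleI (ℓ : ℝ) : ℝ :=
  2 / 3 + (1 / 3) * (sinh ℓ) ^ 2 * cosh ℓ - (2 / 3) * cosh ℓ

/-- The primitive of `hypCandleI` vanishing at `0`. -/
noncomputable def hypCandleII (ℓ : ℝ) : ℝ :=
  (2 / 3) * ℓ + (1 / 9) * (sinh ℓ) ^ 3 - (2 / 3) * sinh ℓ

/-- The dual test function for the `κ = -1`, `n = 4` isoperimetric problem. -/
noncomputable def hypG (r ℓ α β : ℝ) : ℝ :=
  (4 / 3) * ℓ - hypCandle ℓ / (9 * (tanh r) ^ 2 * cos α * cos β)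
    + (hypCandleI ℓ / (3 * tanh r)) * (1 / cos α + 1 / cos β) - hypCandleII ℓ

/-- For fixed `α`, the function `ℓ ↦ g(ℓ, α, α)` on `[0, ∞)` attains its maximum at
`ℓ₀ = 2 artanh (tanh r · cos α)` and only there. -/
theorem hypG_lt_of_ne (r α : ℝ) (hr : 0 < r) (hα : α ∈ Set.Ico 0 (π / 2)) :
    ∀ ℓ : ℝ, 0 ≤ ℓ → ℓ ≠ 2 * _root_.artanh (tanh r * cos α) →
      hypG r ℓ α α < hypG r (2 * _root_.artanh (tanh r * cos α)) α α := by
  obtain ⟨hα0, hα2⟩ := hα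
  have hcos : 0 < cos α := Real.cos_pos_of_mem_Ioo ⟨by linarith [Real.pi_pos], hα2⟩
  have hcos1 : cos α ≤ 1 := Real.cos_le_one α
  have htanh : 0 < tanh r := by
    rw [Real.tanh_eq_sinh_div_cosh]
    exact div_pos (by rwa [Real.sinh_pos_iff]) (Real.cosh_pos r)
  have htanh1 : tanh r < 1 := by
    rw [Real.tanh_eq_sinh_div_cosh, div_lt_one (Real.cosh_pos r)]
    nlinarith [Real.cosh_sub_sinh r, Real.exp_pos (-r)]
  set t : ℝ := tanh r * cos α with ht
  have ht0 : 0 < t := mul_pos htanh hcos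
  have ht1 : t < 1 := by
    calc t ≤ tanh r * 1 := by
            exact mul_le_mul_of_nonneg_left hcos1 htanh.le
      _ < 1 := by linarith
  set L : ℝ := 2 * _root_.artanh t with hL
  have hE0 : exp L = (1 + t) / (1 - t) := by
    rw [hL, _root_.artanh, show 2 * (Real.log ((1 + t) / (1 - t)) / 2) = Real.log ((1 + t) / (1 - t)) by
      ring, Real.exp_log (div_pos (by linarith) (by linarith))]
  have hL0 : 0 < L := by
    rw [← Real.exp_lt_exp, Real.exp_zero, hE0, lt_div_iff₀ (by linarith)]
    linarith
  set G : ℝ → ℝ := fun ℓ => hypG r ℓ α α with hG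
  set D : ℝ → ℝ := fun x => (1/3) * ((1 + cosh x - sinh x / t) *
      (2 + cosh x - cosh x ^ 2 + sinh x * cosh x / t)) with hD
  -- derivative of hypCandleI is hypCandle
  have hI : ∀ x : ℝ, HasDerivAt hypCandleI (hypCandle x) x := by
    intro x
    have h := ((hasDerivAt_const x ((2:ℝ)/3)).add
        ((((Real.hasDerivAt_sinh x).pow 2).mul (Real.hasDerivAt_cosh x)).const_mul ((1:ℝ)/3))).sub
        ((Real.hasDerivAt_cosh x).const_mul ((2:ℝ)/3))
    have hfun : hypCandleI = fun y => 2/3 + 1/3 * (sinh y ^ 2 * cosh y) - 2/3 * cosh y := by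
      funext y; unfold hypCandleI; ring
    rw [hfun]
    refine h.congr_deriv (Eq.symm ?_)
    unfold hypCandle
    push_cast [Pi.pow_apply]
    linear_combination (-(2/3) * sinh x) * Real.cosh_sq x
  have hII : ∀ x : ℝ, HasDerivAt hypCandleII (hypCandleI x) x := by
    intro x
    have h := (((hasDerivAt_id x).const_mul ((2:ℝ)/3)).add
        (((Real.hasDerivAt_sinh x).pow 3).const_mul ((1:ℝ)/9))).sub
        ((Real.hasDerivAt_sinh x).const_mul ((2:ℝ)/3))
    refine h.congr_deriv (Eq.symm ?_)
    unfold hypCandleI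
    push_cast
    ring
  have hC3 : ∀ x : ℝ, HasDerivAt hypCandle (3 * sinh x ^ 2 * cosh x) x := by
    intro x
    have h := (Real.hasDerivAt_sinh x).pow 3
    have : ((3:ℕ) : ℝ) * sinh x ^ (3 - 1) * cosh x = 3 * sinh x ^ 2 * cosh x := by push_cast; ring
    rw [← this]
    exact h
  have hderiv : ∀ x : ℝ, HasDerivAt G (D x) x := by
    intro x
    have h : HasDerivAt G
        (4 / 3 * 1 - 3 * sinh x ^ 2 * cosh x / (9 * (tanh r) ^ 2 * cos α * cos α)
          + hypCandle x / (3 * tanh r) * (1 / cos α + 1 / cos α) - hypCandleI x) x := by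
      exact ((((hasDerivAt_id x).const_mul ((4:ℝ)/3)).sub
        ((hC3 x).div_const (9 * (tanh r) ^ 2 * cos α * cos α))).add
        (((hI x).div_const (3 * tanh r)).mul_const (1 / cos α + 1 / cos α))).sub (hII x)
    convert h using 1
    simp only [hD]
    unfold hypCandle hypCandleI
    have hexn : exp x ≠ 0 := ne_of_gt (Real.exp_pos x)
    have h1 : tanh r ≠ 0 := ne_of_gt htanh
    have h2 : cos α ≠ 0 := ne_of_gt hcos
    rw [ht, Real.sinh_eq x, Real.cosh_eq x, Real.exp_neg x]
    field_simp
    ring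
  have hcont : Continuous G := continuous_iff_continuousAt.2 fun x => (hderiv x).continuousAt
  -- the sign of the first factor
  have hfac : ∀ x : ℝ, (1 + cosh x - sinh x / t) =
      ((exp x + 1) * ((1 + t) - (1 - t) * exp x)) / (2 * t * exp x) := by
    intro x
    have hexn : exp x ≠ 0 := ne_of_gt (Real.exp_pos x)
    rw [Real.sinh_eq, Real.cosh_eq, Real.exp_neg]
    field_simp
    ring
  have hF2 : ∀ x : ℝ, 0 ≤ x → 0 < 2 + cosh x - cosh x ^ 2 + sinh x * cosh x / t := by
    intro x hx
    have hS : 0 ≤ sinh x := by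
      rw [← Real.sinh_zero]; exact Real.sinh_le_sinh.2 hx
    have hCS : 0 < cosh x - sinh x := by
      rw [Real.cosh_sub_sinh]; exact Real.exp_pos _
    have hC := Real.cosh_pos x
    have hsq := Real.cosh_sq x
    have h1 : sinh x * cosh x ≤ sinh x * cosh x / t := by
      rw [le_div_iff₀ ht0]
      nlinarith [mul_nonneg hS hC.le]
    nlinarith [mul_nonneg hS hCS.le]
  have hsign_pos : ∀ x : ℝ, 0 < x → x < L → 0 < D x := by
    intro x hx hxL
    have h1 : 0 < (1 + t) - (1 - t) * exp x := by
      have := Real.exp_lt_exp.2 hxL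
      rw [hE0, lt_div_iff₀ (by linarith)] at this
      nlinarith
    have hF1 : 0 < 1 + cosh x - sinh x / t := by
      rw [hfac x]
      have hex := Real.exp_pos x
      positivity
    simp only [hD]
    exact mul_pos (by norm_num) (mul_pos hF1 (hF2 x hx.le))
  have hsign_neg : ∀ x : ℝ, L < x → D x < 0 := by
    intro x hxL
    have hx : 0 < x := lt_trans hL0 hxL
    have h1 : (1 + t) - (1 - t) * exp x < 0 := by
      have := Real.exp_lt_exp.2 hxL
      rw [hE0, div_lt_iff₀ (by linarith)] at this
      nlinarith
    have hF1 : 1 + cosh x - sinh x / t < 0 := by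
      rw [hfac x]
      have hex := Real.exp_pos x
      apply div_neg_of_neg_of_pos
      · nlinarith
      · positivity
    have := mul_neg_of_neg_of_pos hF1 (hF2 x hx.le)
    simp only [hD]
    linarith
  have hmono : StrictMonoOn G (Set.Icc 0 L) := by
    apply strictMonoOn_of_deriv_pos (convex_Icc _ _) hcont.continuousOn
    intro x hx
    rw [interior_Icc] at hx
    rw [(hderiv x).deriv]
    exact hsign_pos x hx.1 hx.2
  have hanti : StrictAntiOn G (Set.Ici L) := by
    apply strictAntiOn_of_deriv_neg (convex_Ici _) hcont.continuousOn
    intro x hx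
    rw [interior_Ici] at hx
    rw [(hderiv x).deriv]
    exact hsign_neg x hx
  intro ℓ hℓ hne
  rcases lt_or_gt_of_ne hne with h | h
  · exact hmono ⟨hℓ, h.le⟩ ⟨hL0.le, le_rfl⟩ h
  · exact hanti Set.self_mem_Ici (le_of_lt h) h
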